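/- Every FAM mechanism admits a Nash equilibrium at every preference profile: given any stable matching μ of the true problem P, the profile P' in which each assigned student reports only μ(i) as acceptable and each unassigned student reports no school acceptable satisfies ψ(P') = μ and is a Nash equilibrium of the FAM mechanism ψ. -/

import Mathlib

open Finset
open scoped Classical

/-- A matching assigns each student a school or `none` (unassigned). -/
abbrev Matching (I S : Type*) := I → Option S

/-- An individual strict preference over `S ∪ {∅}`: an injective utility
function on `Option S` (higher value = more preferred, `none` = being
unassigned). -/
abbrev IndPref (S : Type*) := {f : Option S → ℕ // Function.Injective f}

/-- A preference profile: one strict preference per student. -/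
abbrev Prof (I S : Type*) := I → IndPref S

/-- Strict school priorities: for each school, an injective rank over
students (higher value = higher priority). -/
abbrev Prio (I S : Type*) := {p : S → I → ℕ // ∀ s, Function.Injective (p s)}

/-- A mechanism maps reported preference profiles to matchings. -/
abbrev Mechanism (I S : Type*) := Prof I S → Matching I S

variable {I S : Type*} [Fintype I] [DecidableEq I] [Fintype S] [DecidableEq S]

/-- Capacity feasibility. -/
def Feasible (q : S → ℕ) (μ : Matching I S) : Prop :=
  ∀ s : S, (univ.filter fun i => μ i = some s).card ≤ q s

/-- Individual rationality with respect to profile `P`. -/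
def IndivRational (P : Prof I S) (μ : Matching I S) : Prop :=
  ∀ i, (P i).1 none ≤ (P i).1 (μ i)

/-- Number of assigned students. -/
def msize (μ : Matching I S) : ℕ := (univ.filter fun i => μ i ≠ none).card

/-- Maximality: no feasible individually rational matching assigns strictly
more students. -/
def MaximalMatching (P : Prof I S) (q : S → ℕ) (μ : Matching I S) : Prop :=
  ∀ μ' : Matching I S, Feasible q μ' → IndivRational P μ' → msize μ' ≤ msize μ

/-- `μ'` Pareto dominates `μ`. -/
def Dominates (P : Prof I S) (μ' μ : Matching I S) : Prop :=
  (∀ i, (P i).1 (μ i) ≤ (P i).1 (μ' i)) ∧ ∃ j, (P j).1 (μ j) < (P j).1 (μ' j)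

/-- Pareto efficiency among feasible individually rational matchings. -/
def Efficient (P : Prof I S) (q : S → ℕ) (μ : Matching I S) : Prop :=
  ¬ ∃ μ', Feasible q μ' ∧ IndivRational P μ' ∧ Dominates P μ' μ

/-- Non-wastefulness. -/
def NonWasteful (P : Prof I S) (q : S → ℕ) (μ : Matching I S) : Prop :=
  ∀ i s, (P i).1 (μ i) < (P i).1 (some s) →
    (univ.filter fun j => μ j = some s).card = q s

/-- Fairness (no justified envy). -/
def Fair (P : Prof I S) (pr : Prio I S) (μ : Matching I S) : Prop :=
  ¬ ∃ i s j, (P i).1 (μ i) < (P i).1 (some s) ∧ μ j = some s ∧ pr.1 s j < pr.1 s i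

/-- Stability: individually rational, non-wasteful and fair. -/
def Stable (P : Prof I S) (pr : Prio I S) (q : S → ℕ) (μ : Matching I S) : Prop :=
  Feasible q μ ∧ IndivRational P μ ∧ NonWasteful P q μ ∧ Fair P pr μ

/-- Fairness for unassigned students. -/
def FairForUnassigned (P : Prof I S) (pr : Prio I S) (μ : Matching I S) : Prop :=
  ¬ ∃ i s j, μ i = none ∧ (P i).1 none < (P i).1 (some s) ∧ μ j = some s ∧
    pr.1 s j < pr.1 s i

/-- `(a, t)` is an improving chain for `μ`: each student `a k` strictly
prefers `t k` to their assignment, each school `t k` (for `k < n`) is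
currently occupied by the next student `a (k+1)`, and the last school has
excess capacity. -/
def IsImpChain (P : Prof I S) (q : S → ℕ) (μ : Matching I S)
    (n : ℕ) (a : Fin (n + 1) → I) (t : Fin (n + 1) → S) : Prop :=
  Function.Injective a ∧
  (∀ k, (P (a k)).1 (μ (a k)) < (P (a k)).1 (some (t k))) ∧
  (∀ k : Fin n, μ (a k.succ) = some (t k.castSucc)) ∧
  (univ.filter fun j => μ j = some (t (Fin.last n))).card < q (t (Fin.last n))

/-- `(a, t)` is an improving cycle for `μ`: each student `a k` is assigned
to `t k` and strictly prefers the school `t (k+1)` vacated by the next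
student in the cycle. -/
def IsImpCycle (P : Prof I S) (μ : Matching I S)
    (n : ℕ) (a : Fin (n + 1) → I) (t : Fin (n + 1) → S) : Prop :=
  Function.Injective a ∧
  (∀ k, μ (a k) = some (t k)) ∧
  (∀ k, (P (a k)).1 (some (t k)) < (P (a k)).1 (some (t (k + 1))))

def HasImpChain (P : Prof I S) (q : S → ℕ) (μ : Matching I S) : Prop :=
  ∃ n a t, IsImpChain P q μ n a t

def HasImpCycle (P : Prof I S) (μ : Matching I S) : Prop :=
  ∃ n a t, IsImpCycle P μ n a t

/-- Implementing one improving chain or cycle: every student involved moves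
to the school they prefer in the chain/cycle, all others keep their
assignment. -/
def ImplementStep (P : Prof I S) (q : S → ℕ) (μ μ' : Matching I S) : Prop :=
  (∃ n a t, IsImpChain P q μ n a t ∧ (∀ k, μ' (a k) = some (t k)) ∧
    ∀ j, (∀ k, j ≠ a k) → μ' j = μ j) ∨
  (∃ n a t, IsImpCycle P μ n a t ∧ (∀ k, μ' (a k) = some (t (k + 1))) ∧
    ∀ j, (∀ k, j ≠ a k) → μ' j = μ j)

/-- One refinement step of the first stage of EAM: keep only the matchings
assigning student `i`, whenever such matchings exist. -/
noncomputable def xiStep (A : Set (Matching I S)) (i : I) : Set (Matching I S) :=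
  if ∃ μ ∈ A, μ i ≠ none then {μ ∈ A | μ i ≠ none} else A

/-- The set `ξ^n` of the first stage of EAM, for the enumeration `L` of the
students, starting from all feasible individually rational matchings. -/
noncomputable def xiList (P : Prof I S) (q : S → ℕ) (L : List I) :
    Set (Matching I S) :=
  L.foldl xiStep {μ | Feasible q μ ∧ IndivRational P μ}

/-- `μ` is a possible outcome of an EAM procedure with student enumeration
`L`: it is reachable from some matching selected in the first stage by
implementing improving chains/cycles, and admits no further improving chain
or cycle. -/
def IsEAMOutcome (P : Prof I S) (q : S → ℕ) (L : List I) (μ : Matching I S) :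
    Prop :=
  ∃ μ₀ ∈ xiList P q L, Relation.ReflTransGen (ImplementStep P q) μ₀ μ ∧
    ¬ HasImpChain P q μ ∧ ¬ HasImpCycle P μ

/-- EAM mechanisms with enumeration `L`. -/
def IsEAMMech (q : S → ℕ) (L : List I) (ψ : Mechanism I S) : Prop :=
  ∀ P, IsEAMOutcome P q L (ψ P)

/-- One sub-step of Step 2 of FAM: a pair `(i, s)` violating fairness for
unassigned students is resolved by placing `i` at `s` and unassigning the
lowest-priority student currently matched to `s`. -/
def FairStep (P : Prof I S) (pr : Prio I S) (μ μ' : Matching I S) : Prop :=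
  ∃ i s j, μ i = none ∧ (P i).1 none < (P i).1 (some s) ∧ μ j = some s ∧
    pr.1 s j < pr.1 s i ∧ (∀ j', μ j' = some s → pr.1 s j ≤ pr.1 s j') ∧
    μ' = Function.update (Function.update μ j none) i (some s)

/-- FAM mechanisms: an EAM first stage followed by iterated resolution of
violations of fairness for unassigned students. -/
def IsFAMMech (q : S → ℕ) (pr : Prio I S) (L : List I) (ψ : Mechanism I S) :
    Prop :=
  ∀ P, ∃ μ₁, IsEAMOutcome P q L μ₁ ∧
    Relation.ReflTransGen (FairStep P pr) μ₁ (ψ P) ∧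
    FairForUnassigned P pr (ψ P)

/-- Individually rational mechanism (with respect to reports). -/
def IRMech (q : S → ℕ) (ψ : Mechanism I S) : Prop :=
  ∀ P, Feasible q (ψ P) ∧ IndivRational P (ψ P)

/-- MaximalMatching mechanism. -/
def MaximalMech (q : S → ℕ) (ψ : Mechanism I S) : Prop :=
  IRMech q ψ ∧ ∀ P, MaximalMatching P q (ψ P)

/-- Nash equilibrium of the preference-reporting game induced by `ψ`, with
true preferences `u`. -/
def NashEq (u : Prof I S) (ψ : Mechanism I S) (P' : Prof I S) : Prop :=
  ∀ (i : I) (Pi'' : IndPref S),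
    (u i).1 (ψ (Function.update P' i Pi'') i) ≤ (u i).1 (ψ P' i)

/-- Strategy-proofness. -/
def StrategyProof (ψ : Mechanism I S) : Prop :=
  ∀ (P : Prof I S) (i : I) (Pi' : IndPref S),
    (P i).1 (ψ (Function.update P i Pi') i) ≤ (P i).1 (ψ P i)

/-- A maximizer of `f` on the nonempty finite set `A`. -/
noncomputable def bestOf (f : Option S → ℕ) (A : Finset (Option S))
    (h : A.Nonempty) : Option S :=
  (Finset.exists_max_image A f h).choose

/-- Serial dictatorship: students pick, in the order given, their most
preferred option among `none` and the schools with remaining capacity. -/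
noncomputable def sdRun (P : Prof I S) :
    List I → (S → ℕ) → Matching I S → Matching I S
  | [], _, μ => μ
  | i :: rest, rem, μ =>
    let c := bestOf (P i).1 (insert none ((univ.filter fun s => 0 < rem s).image some))
      (insert_nonempty _ _)
    sdRun P rest (fun s => if c = some s then rem s - 1 else rem s)
      (Function.update μ i c)

/-- The serial dictatorship outcome with ordering `L` and capacities `q`. -/
noncomputable def SD (P : Prof I S) (q : S → ℕ) (L : List I) : Matching I S :=
  sdRun P L q fun _ => none


variable {I S : Type*} [Fintype I] [DecidableEq I] [Fintype S] [DecidableEq S]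

section NashHelpers

lemma xiStep_subset' (A : Set (Matching I S)) (i : I) : xiStep A i ⊆ A := by
  unfold xiStep
  split
  · exact fun ν hν => hν.1
  · exact fun ν hν => hν

lemma foldl_xiStep_subset' : ∀ (L : List I) (A : Set (Matching I S)),
    L.foldl xiStep A ⊆ A
  | [], _ => fun _ h => h
  | i :: L, A => fun ν hν =>
      xiStep_subset' A i (foldl_xiStep_subset' L (xiStep A i) hν)

lemma trunc_opt_pt {S' : Type*} {Pi : IndPref S'} {mi o : Option S'}
    (hPi : ∀ s, Pi.1 none < Pi.1 (some s) ↔ some s = mi)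
    (ho : Pi.1 none ≤ Pi.1 o) : o = none ∨ o = mi := by
  cases o with
  | none => exact Or.inl rfl
  | some s =>
    rcases ho.lt_or_eq with hlt | he
    · exact Or.inr ((hPi s).1 hlt)
    · exact absurd (Pi.2 he) (by simp)

lemma implementStep_preserves (P : Prof I S) (q : S → ℕ) {μ μ' : Matching I S}
    (hf : Feasible q μ) (hir : IndivRational P μ) (h : ImplementStep P q μ μ') :
    Feasible q μ' ∧ IndivRational P μ' := by
  classical
  rcases h with ⟨n, a, t, ⟨hinj, hpref, hmid, hlast⟩, hnew, hoth⟩ |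
    ⟨n, a, t, ⟨hinj, hma, hpref⟩, hnew, hoth⟩
  · -- chain case
    refine ⟨?_, ?_⟩
    · intro s
      set f : I → I := fun j => if h : ∃ k, j = a k then a (h.choose + 1) else j
        with hfdef
      have hfinj : Function.Injective f := by
        intro j1 j2 heq
        by_cases e1 : ∃ k, j1 = a k <;> by_cases e2 : ∃ k, j2 = a k
        · rw [hfdef] at heq; simp only [dif_pos e1, dif_pos e2] at heq
          have h4 := add_right_cancel (hinj heq)
          rw [e1.choose_spec, e2.choose_spec, h4]
        · exfalso; rw [hfdef] at heq; simp only [dif_pos e1, dif_neg e2] at heq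
          exact e2 ⟨_, heq.symm⟩
        · exfalso; rw [hfdef] at heq; simp only [dif_neg e1, dif_pos e2] at heq
          exact e1 ⟨_, heq⟩
        · rw [hfdef] at heq; simpa only [dif_neg e1, dif_neg e2] using heq
      have hmaps : ∀ j, μ' j = some s → j ≠ a (Fin.last n) → μ (f j) = some s := by
        intro j hj hne
        by_cases hex : ∃ k, j = a k
        · have hk := hex.choose_spec
          have hts : t hex.choose = s := by
            have h5 := hnew hex.choose
            rw [← hk, hj] at h5
            exact Option.some_injective S h5.symm
          have hkl : hex.choose ≠ Fin.last n := fun e => hne (by rw [hk, e])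
          obtain ⟨m, hm⟩ := Fin.exists_castSucc_eq.2 hkl
          have hfj : f j = a m.succ := by
            rw [hfdef]; simp only [dif_pos hex]
            rw [← hm, Fin.coeSucc_eq_succ]
          rw [hfj, hmid m, hm, hts]
        · have hfj : f j = j := by rw [hfdef]; simp only [dif_neg hex]
          rw [hfj, ← hoth j (fun k hk => hex ⟨k, hk⟩)]; exact hj
      have hcard : ((univ.filter fun j => μ' j = some s).erase (a (Fin.last n))).card
          ≤ (univ.filter fun j => μ j = some s).card := by
        apply Finset.card_le_card_of_injOn f
        · intro j hj
          rcases Finset.mem_erase.1 hj with ⟨hne, hj'⟩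
          simp only [Finset.mem_coe, Finset.mem_filter, Finset.mem_univ, true_and] at hj' ⊢
          exact hmaps j hj' hne
        · exact hfinj.injOn
      by_cases hs : t (Fin.last n) = s
      · have hlt : (univ.filter fun j => μ j = some s).card < q s := by
          rw [← hs]; exact hlast
        have h5 : (univ.filter fun j => μ' j = some s).card ≤
            ((univ.filter fun j => μ' j = some s).erase (a (Fin.last n))).card + 1 := by
          by_cases hmem : a (Fin.last n) ∈ univ.filter fun j => μ' j = some s
          · rw [Finset.card_erase_of_mem hmem]; omega
          · rw [Finset.erase_eq_of_notMem hmem]; omega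
        omega
      · have hmem : a (Fin.last n) ∉ univ.filter fun j => μ' j = some s := by
          simp only [Finset.mem_filter, Finset.mem_univ, true_and]
          rw [hnew (Fin.last n)]
          exact fun e => hs (Option.some_injective S e)
        rw [← Finset.erase_eq_of_notMem hmem]
        exact hcard.trans (hf s)
    · intro j
      by_cases hex : ∃ k, j = a k
      · obtain ⟨k, rfl⟩ := hex
        rw [hnew k]
        exact le_of_lt (lt_of_le_of_lt (hir (a k)) (hpref k))
      · rw [hoth j (fun k hk => hex ⟨k, hk⟩)]
        exact hir j
  · -- cycle case
    refine ⟨?_, ?_⟩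
    · intro s
      set f : I → I := fun j => if h : ∃ k, j = a k then a (h.choose + 1) else j
        with hfdef
      have hfinj : Function.Injective f := by
        intro j1 j2 heq
        by_cases e1 : ∃ k, j1 = a k <;> by_cases e2 : ∃ k, j2 = a k
        · rw [hfdef] at heq; simp only [dif_pos e1, dif_pos e2] at heq
          have h4 := add_right_cancel (hinj heq)
          rw [e1.choose_spec, e2.choose_spec, h4]
        · exfalso; rw [hfdef] at heq; simp only [dif_pos e1, dif_neg e2] at heq
          exact e2 ⟨_, heq.symm⟩
        · exfalso; rw [hfdef] at heq; simp only [dif_neg e1, dif_pos e2] at heq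
          exact e1 ⟨_, heq⟩
        · rw [hfdef] at heq; simpa only [dif_neg e1, dif_neg e2] using heq
      have hcard : (univ.filter fun j => μ' j = some s).card
          ≤ (univ.filter fun j => μ j = some s).card := by
        apply Finset.card_le_card_of_injOn f
        · intro j hj
          simp only [Finset.mem_coe, Finset.mem_filter, Finset.mem_univ, true_and] at hj ⊢
          by_cases hex : ∃ k, j = a k
          · have hk := hex.choose_spec
            have hts : t (hex.choose + 1) = s := by
              have h5 := hnew hex.choose
              rw [← hk, hj] at h5
              exact Option.some_injective S h5.symm
            have hfj : f j = a (hex.choose + 1) := by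
              rw [hfdef]; simp only [dif_pos hex]
            rw [hfj, hma (hex.choose + 1), hts]
          · have hfj : f j = j := by rw [hfdef]; simp only [dif_neg hex]
            rw [hfj, ← hoth j (fun k hk => hex ⟨k, hk⟩)]; exact hj
        · exact hfinj.injOn
      exact hcard.trans (hf s)
    · intro j
      by_cases hex : ∃ k, j = a k
      · obtain ⟨k, rfl⟩ := hex
        rw [hnew k]
        have h5 := hir (a k)
        rw [hma k] at h5
        exact le_of_lt (lt_of_le_of_lt h5 (hpref k))
      · rw [hoth j (fun k hk => hex ⟨k, hk⟩)]
        exact hir j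

lemma fairStep_preserves (P : Prof I S) (pr : Prio I S) (q : S → ℕ)
    {μ μ' : Matching I S}
    (hf : Feasible q μ) (hir : IndivRational P μ) (h : FairStep P pr μ μ') :
    Feasible q μ' ∧ IndivRational P μ' := by
  obtain ⟨i, s0, j, hi, hpref, hj, _, _, rfl⟩ := h
  have hij : j ≠ i := fun e => by rw [e, hi] at hj; exact absurd hj (by simp)
  have hμ'i : Function.update (Function.update μ j none) i (some s0) i = some s0 :=
    Function.update_self _ _ _
  have hμ'j : Function.update (Function.update μ j none) i (some s0) j = none := by
    rw [Function.update_of_ne hij, Function.update_self]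
  have hμ'o : ∀ x, x ≠ i → x ≠ j →
      Function.update (Function.update μ j none) i (some s0) x = μ x := by
    intro x h1 h2
    rw [Function.update_of_ne h1, Function.update_of_ne h2]
  constructor
  · intro s
    by_cases hs : s = s0
    · subst hs
      have hjF : j ∈ univ.filter fun x => μ x = some s := by simp [hj]
      have hsub : (univ.filter fun x =>
            Function.update (Function.update μ j none) i (some s) x = some s)
          ⊆ insert i ((univ.filter fun x => μ x = some s).erase j) := by
        intro x hx
        simp only [Finset.mem_filter, Finset.mem_univ, true_and] at hx
        by_cases h1 : x = i
        · exact Finset.mem_insert.2 (Or.inl h1)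
        · by_cases h2 : x = j
          · subst h2; rw [hμ'j] at hx; exact absurd hx (by simp)
          · refine Finset.mem_insert_of_mem (Finset.mem_erase.2 ⟨h2, ?_⟩)
            simp only [Finset.mem_filter, Finset.mem_univ, true_and]
            rw [← hμ'o x h1 h2]; exact hx
      have h1 := Finset.card_le_card hsub
      have h2 := Finset.card_insert_le i ((univ.filter fun x => μ x = some s).erase j)
      have h3 := Finset.card_erase_of_mem hjF
      have h4 := hf s
      have h5 : 1 ≤ (univ.filter fun x => μ x = some s).card :=
        Finset.card_pos.2 ⟨j, hjF⟩
      omega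
    · have hsub : (univ.filter fun x =>
            Function.update (Function.update μ j none) i (some s0) x = some s)
          ⊆ univ.filter fun x => μ x = some s := by
        intro x hx
        simp only [Finset.mem_filter, Finset.mem_univ, true_and] at hx ⊢
        by_cases h1 : x = i
        · subst h1; rw [hμ'i] at hx
          exact absurd (Option.some_injective S hx).symm hs
        · by_cases h2 : x = j
          · subst h2; rw [hμ'j] at hx; exact absurd hx (by simp)
          · rw [← hμ'o x h1 h2]; exact hx
      exact (Finset.card_le_card hsub).trans (hf s)
  · intro x
    by_cases h1 : x = i
    · subst h1; rw [hμ'i]; exact le_of_lt hpref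
    · by_cases h2 : x = j
      · subst h2; rw [hμ'j]
      · rw [hμ'o x h1 h2]; exact hir x

lemma xiList_key {P' : Prof I S} {μ : Matching I S} {q : S → ℕ}
    (hP' : ∀ i s, (P' i).1 none < (P' i).1 (some s) ↔ some s = μ i) :
    ∀ (L : List I) (A : Set (Matching I S)),
      A ⊆ {ν | Feasible q ν ∧ IndivRational P' ν} → μ ∈ A →
      μ ∈ L.foldl xiStep A ∧
        ∀ ν ∈ L.foldl xiStep A, ∀ i ∈ L, μ i ≠ none → ν i ≠ none := by
  intro L
  induction L with
  | nil =>
    intro A hA hμ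
    exact ⟨hμ, fun ν hν i hi => by simp at hi⟩
  | cons i L ih =>
    intro A hA hμ
    simp only [List.foldl_cons]
    have hsub : xiStep A i ⊆ A := xiStep_subset' A i
    have hμ' : μ ∈ xiStep A i := by
      unfold xiStep
      split
      · next hcond =>
        obtain ⟨ν, hν, hνi⟩ := hcond
        rcases trunc_opt_pt (hP' i) ((hA hν).2 i) with h | h
        · exact absurd h hνi
        · exact ⟨hμ, fun e => hνi (h.trans e)⟩
      · exact hμ
    obtain ⟨h1, h2⟩ := ih (xiStep A i) (hsub.trans hA) hμ'
    refine ⟨h1, ?_⟩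
    intro ν hν i' hi' hμi'
    rcases List.mem_cons.1 hi' with rfl | hi'
    · have hν' : ν ∈ xiStep A i' := foldl_xiStep_subset' L _ hν
      have hcond : ∃ ν' ∈ A, ν' i' ≠ none := ⟨μ, hμ, hμi'⟩
      rw [xiStep, if_pos hcond] at hν'
      exact hν'.2
    · exact h2 ν hν i' hi' hμi'

end NashHelpers

/-- for any FAM mechanism ψ and any stable matching μ of the
true problem, the profile where each student reports as acceptable exactly
their assignment under μ produces μ and is a Nash equilibrium; in
particular ψ admits a Nash equilibrium at every profile. -/
theorem FAM_admits_equilibrium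
    (q : S → ℕ) (pr : Prio I S) (L : List I)
    (hnd : L.Nodup) (hcomp : ∀ i : I, i ∈ L)
    (ψ : Mechanism I S) (hψ : IsFAMMech q pr L ψ)
    (u : Prof I S) (μ : Matching I S) (hst : Stable u pr q μ) :
    ∀ P' : Prof I S,
      (∀ i s, (P' i).1 none < (P' i).1 (some s) ↔ some s = μ i) →
        ψ P' = μ ∧ NashEq u ψ P' := by
  intro P' hP'
  obtain ⟨hfμ, hirμ, hnw, hfair⟩ := hst
  -- μ is individually rational for P'
  have hIRμ' : IndivRational P' μ := by
    intro i
    cases hmi : μ i with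
    | none => exact le_refl _
    | some s => exact le_of_lt ((hP' i s).2 hmi.symm)
  -- μ i is the top choice of P' i
  have hnotlt : ∀ i s, ¬ (P' i).1 (μ i) < (P' i).1 (some s) := by
    intro i s hlt
    have h2 := (hP' i s).1 (lt_of_le_of_lt (hIRμ' i) hlt)
    rw [← h2] at hlt
    exact lt_irrefl _ hlt
  -- no improving step and no fair step from μ under P'
  have hnostep : ∀ ν, ¬ ImplementStep P' q μ ν := by
    rintro ν (⟨n, a, t, ⟨_, hpref, _, _⟩, _, _⟩ | ⟨n, a, t, ⟨_, hma, hpref⟩, _, _⟩)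
    · exact hnotlt (a 0) (t 0) (hpref 0)
    · have h5 := hpref 0
      rw [← hma 0] at h5
      exact hnotlt (a 0) (t (0 + 1)) h5
  have hnofair : ∀ ν, ¬ FairStep P' pr μ ν := by
    rintro ν ⟨i, s, j, hi, hlt, -⟩
    have h5 := (hP' i s).1 hlt
    rw [hi] at h5
    exact absurd h5 (by simp)
  -- part 1: ψ P' = μ
  obtain ⟨μ₁, ⟨μ₀, hμ₀, hsteps, -, -⟩, hfsteps, hFFU⟩ := hψ P'
  have hμ₀eq : μ₀ = μ := by
    unfold xiList at hμ₀
    obtain ⟨-, hkey⟩ := xiList_key (q := q) hP' L _ (fun _ h => h) ⟨hfμ, hIRμ'⟩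
    have hμ₀IR : IndivRational P' μ₀ :=
      (foldl_xiStep_subset' L _ hμ₀ :
        μ₀ ∈ {ν | Feasible q ν ∧ IndivRational P' ν}).2
    funext i
    rcases trunc_opt_pt (hP' i) (hμ₀IR i) with h | h
    · by_cases hmi : μ i = none
      · rw [h, hmi]
      · exact absurd h (hkey μ₀ hμ₀ i (hcomp i) hmi)
    · exact h
  rw [hμ₀eq] at hsteps
  have hμ₁eq : μ₁ = μ := by
    rcases hsteps.cases_head with h | ⟨c, hc, -⟩
    · exact h.symm
    · exact absurd hc (hnostep c)
  rw [hμ₁eq] at hfsteps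
  have hpsi : ψ P' = μ := by
    rcases hfsteps.cases_head with h | ⟨c, hc, -⟩
    · exact h.symm
    · exact absurd hc (hnofair c)
  refine ⟨hpsi, ?_⟩
  -- part 2: Nash equilibrium
  intro i Pi''
  rw [hpsi]
  obtain ⟨ν₁, ⟨ν₀, hν₀, hsteps₂, -, -⟩, hfsteps₂, hFFU₂⟩ :=
    hψ (Function.update P' i Pi'')
  set Q := Function.update P' i Pi'' with hQdef
  have h₀ : Feasible q ν₀ ∧ IndivRational Q ν₀ :=
    (foldl_xiStep_subset' L _ hν₀ :
      ν₀ ∈ {ν | Feasible q ν ∧ IndivRational Q ν})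
  have h₁ : ∀ x, Relation.ReflTransGen (ImplementStep Q q) ν₀ x →
      Feasible q x ∧ IndivRational Q x := by
    intro x hx
    induction hx with
    | refl => exact h₀
    | tail _ hstep ih => exact implementStep_preserves Q q ih.1 ih.2 hstep
  have h₂ : ∀ x, Relation.ReflTransGen (FairStep Q pr) ν₁ x →
      Feasible q x ∧ IndivRational Q x := by
    intro x hx
    induction hx with
    | refl => exact h₁ ν₁ hsteps₂
    | tail _ hstep ih => exact fairStep_preserves Q pr q ih.1 ih.2 hstep
  obtain ⟨hνfeas, hνIR⟩ := h₂ (ψ Q) hfsteps₂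
  cases hνi : ψ Q i with
  | none => exact hirμ i
  | some s =>
    by_contra hcon
    have hlt : (u i).1 (μ i) < (u i).1 (some s) := not_le.1 hcon
    have hful := hnw i s hlt
    have hine : μ i ≠ some s := fun e => by rw [e] at hlt; exact lt_irrefl _ hlt
    -- there is a displaced student j : μ j = some s, ψ Q j = none
    have hdisp : ∃ j, μ j = some s ∧ ψ Q j = none := by
      by_contra hnd2
      push_neg at hnd2
      have hsubF : insert i (univ.filter fun j => μ j = some s)
          ⊆ univ.filter fun j => ψ Q j = some s := by
        intro x hx
        rcases Finset.mem_insert.1 hx with rfl | hx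
        · simp [hνi]
        · have hmx : μ x = some s := (Finset.mem_filter.1 hx).2
          have hxi : x ≠ i := fun e => hine (e ▸ hmx)
          have hQx : Q x = P' x := Function.update_of_ne hxi _ _
          have hIRx := hνIR x
          rw [hQx] at hIRx
          rcases trunc_opt_pt (hP' x) hIRx with h | h
          · exact absurd h (hnd2 x hmx)
          · simp only [Finset.mem_filter, Finset.mem_univ, true_and]
            rw [h, hmx]
      have hcard := Finset.card_le_card hsubF
      have hni : i ∉ univ.filter fun j => μ j = some s := by simp [hine]
      rw [Finset.card_insert_of_notMem hni, hful] at hcard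
      have := hνfeas s
      omega
    obtain ⟨j, hjμ, hjν⟩ := hdisp
    have hji : j ≠ i := fun e => hine (e ▸ hjμ)
    have hQj : Q j = P' j := Function.update_of_ne hji _ _
    have hprne : pr.1 s j ≠ pr.1 s i := fun e => hji (pr.2 s e)
    have hprlt : ¬ pr.1 s i < pr.1 s j := by
      intro hc
      exact hFFU₂ ⟨j, s, i, hjν, by rw [hQj]; exact (hP' j s).2 hjμ.symm, hνi, hc⟩
    have hjlt : pr.1 s j < pr.1 s i := lt_of_le_of_ne (not_lt.1 hprlt) hprne
    exact hfair ⟨i, s, j, hlt, hjμ, hjlt⟩
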